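/- arXiv:2408.11708 — 4 statements merged into one kernel-verified Lean document; each statement's English description precedes it below -/
import Mathlib

section
/- Let A = {a_1, ..., a_n} ⊂ (0,1) be a finite set of reals, let λ_1, ..., λ_m be positive reals, and let Θ = ⋃_{j=1}^m λ_j A_j where each A_j is a subset of A^{Z_+} (the set of all products ∏ a_i^{k_i} with k_i nonnegative integers, including the empty product 1). Then for every θ ∈ Θ, every common ratio r ∈ (0,1) such that some geometric sequence {θ' r^k}_{k=0}^∞ is contained in Θ and contains θ, satisfies r ∈ A^{Q_+*}, i.e., r = ∏ a_i^{q_i} for some nonnegative rationals q_i, not all zero. -/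
/-- `A^{Z_+^*}`: products of elements of `A` with nonnegative integer exponents, not all zero. -/
def ZProdStar (A : Finset ℝ) : Set ℝ :=
  {y | ∃ m : ℝ → ℕ, (∃ a ∈ A, m a ≠ 0) ∧ y = ∏ a ∈ A, a ^ m a}

/-- `A^{Z_+} = {1} ∪ A^{Z_+^*}`. -/
def ZProd (A : Finset ℝ) : Set ℝ := {1} ∪ ZProdStar A

/-- `A^{Q_+^*}`: products with nonnegative rational exponents, not all zero. -/
def QProdStar (A : Finset ℝ) : Set ℝ :=
  {y | ∃ q : ℝ → ℚ, (∀ a ∈ A, 0 ≤ q a) ∧ (∃ a ∈ A, q a ≠ 0) ∧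
    y = ∏ a ∈ A, a ^ ((q a : ℝ))}

/-- `R_Θ(θ)`: common ratios of geometric sequences contained in `Θ` passing through `θ`. -/
def RSet (Θ : Set ℝ) (θ : ℝ) : Set ℝ :=
  {r | 0 < r ∧ r < 1 ∧ ∃ θ' ∈ Θ, (∃ k : ℕ, θ = θ' * r ^ k) ∧
    ∀ k : ℕ, θ' * r ^ k ∈ Θ}

/-- Every element of `ZProd A` is a product of elements of `A` with natural exponents. -/
lemma ZProd.exists_rep {A : Finset ℝ} {x : ℝ} (hx : x ∈ ZProd A) :
    ∃ M : ℝ → ℕ, x = ∏ a ∈ A, a ^ M a := by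
  rcases hx with h1 | ⟨M, _, hM⟩
  · exact ⟨fun _ => 0, by simp [Set.mem_singleton_iff.1 h1]⟩
  · exact ⟨M, hM⟩

theorem stmt0 (A : Finset ℝ) (hA : ∀ a ∈ A, a ∈ Set.Ioo (0:ℝ) 1)
    (m : ℕ) (lam : Fin m → ℝ) (hlam : ∀ j, 0 < lam j)
    (Aj : Fin m → Set ℝ) (hAj : ∀ j, Aj j ⊆ ZProd A)
    (Θ : Set ℝ) (hΘ : Θ = ⋃ j, (fun x => lam j * x) '' Aj j) :
    ∀ θ ∈ Θ, RSet Θ θ ⊆ QProdStar A := by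
  intro θ _ r hr
  obtain ⟨hr0, hr1, θ', hθ'Θ, _, hseq⟩ := hr
  -- for each k, extract j and exponent vector
  have hrep : ∀ k : ℕ, ∃ (j : Fin m) (M : ℝ → ℕ),
      lam j * ∏ a ∈ A, a ^ M a = θ' * r ^ k := by
    intro k
    have h := hseq k
    rw [hΘ] at h
    obtain ⟨j, x, hx, hxe⟩ := Set.mem_iUnion.1 h
    obtain ⟨M, hM⟩ := ZProd.exists_rep (hAj j hx)
    exact ⟨j, M, by rw [← hM]; exact hxe⟩
  choose J M hJM using hrep
  -- monotone subsequence of exponent vectors (Dickson's lemma)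
  have hwo : IsWellOrder ℕ (· < ·) := inferInstance
  have hpwo : Set.IsPWO (Set.univ : Set (↥A → ℕ)) :=
    Set.isPWO_of_wellQuasiOrderedLE Set.univ
  obtain ⟨g, hg⟩ := hpwo.exists_monotone_subseq
    (f := fun k (a : ↥A) => M k a.1) (fun _ => Set.mem_univ _)
  -- pigeonhole on J ∘ g
  obtain ⟨i₁, i₂, hne, hJeq⟩ := Finite.exists_ne_map_eq_of_infinite (J ∘ g)
  wlog hlt : i₁ < i₂ generalizing i₁ i₂
  · exact this i₂ i₁ hne.symm hJeq.symm ((Ne.lt_or_gt hne).resolve_left hlt)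
  set k₁ := g i₁ with hk₁
  set k₂ := g i₂ with hk₂
  have hkk : k₁ < k₂ := g.strictMono hlt
  have hMle : ∀ a ∈ A, M k₁ a ≤ M k₂ a := by
    intro a ha
    exact hg hlt.le ⟨a, ha⟩
  set d : ℕ := k₂ - k₁ with hd
  have hd0 : d ≠ 0 := Nat.sub_ne_zero_of_lt hkk
  set D : ℝ → ℕ := fun a => M k₂ a - M k₁ a with hD
  have hP1pos : (0:ℝ) < ∏ a ∈ A, a ^ M k₁ a :=
    Finset.prod_pos fun a ha => pow_pos (hA a ha).1 _
  -- key identity : r ^ d = ∏ a ^ D a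
  have key : r ^ d = ∏ a ∈ A, a ^ D a := by
    have e1 := hJM k₁
    have e2 := hJM k₂
    have hJ : J k₁ = J k₂ := hJeq
    rw [← hJ] at e2
    have hrk : θ' * r ^ k₂ = θ' * r ^ k₁ * r ^ d := by
      rw [mul_assoc, ← pow_add, hd, Nat.add_sub_cancel' hkk.le]
    have hcancel : (∏ a ∈ A, a ^ M k₂ a) = (∏ a ∈ A, a ^ M k₁ a) * r ^ d := by
      have hl : lam (J k₁) ≠ 0 := (hlam _).ne'
      have : lam (J k₁) * ∏ a ∈ A, a ^ M k₂ a
          = lam (J k₁) * ((∏ a ∈ A, a ^ M k₁ a) * r ^ d) := by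
        rw [e2, hrk, ← e1]; ring
      exact mul_left_cancel₀ hl this
    have hsplit : (∏ a ∈ A, a ^ M k₂ a) = (∏ a ∈ A, a ^ M k₁ a) * ∏ a ∈ A, a ^ D a := by
      rw [← Finset.prod_mul_distrib]
      refine Finset.prod_congr rfl fun a ha => ?_
      rw [← pow_add]
      congr 1
      have h := hMle a ha
      simp only [hD]
      omega
    have := hsplit.symm.trans hcancel
    exact (mul_left_cancel₀ hP1pos.ne' this).symm
  -- the rational exponents
  refine ⟨fun a => (D a : ℚ) / (d : ℚ), fun a _ => by positivity, ?_, ?_⟩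
  · -- not all zero
    by_contra hall
    push_neg at hall
    have : r ^ d = 1 := by
      rw [key]
      refine Finset.prod_eq_one fun a ha => ?_
      have := hall a ha
      have hDa : D a = 0 := by
        field_simp at this
        exact_mod_cast this
      rw [hDa, pow_zero]
    have hlt1 : r ^ d < 1 := pow_lt_one₀ hr0.le hr1 hd0
    rw [this] at hlt1
    exact lt_irrefl _ hlt1
  · -- r = ∏ a ^ (q a)
    have hdR : ((d : ℝ)) ≠ 0 := Nat.cast_ne_zero.2 hd0
    have h1 : r = (r ^ d) ^ ((d : ℝ)⁻¹) := by
      rw [← Real.rpow_natCast r d, ← Real.rpow_mul hr0.le, mul_inv_cancel₀ hdR,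
        Real.rpow_one]
    rw [h1, key, ← Real.finset_prod_rpow A _ (fun a ha => pow_nonneg (hA a ha).1.le _) _]
    refine Finset.prod_congr rfl fun a ha => ?_
    rw [← Real.rpow_natCast a (D a), ← Real.rpow_mul (hA a ha).1.le]
    congr 1
    push_cast
    ring
end

section
/- Let X ⊂ (0,1) and Λ ⊂ (0,∞) be finite sets, and let Θ = Λ X^{Z_+} = {λ x : λ ∈ Λ, x ∈ X^{Z_+}}. Then for every θ ∈ Θ one has X^{Z_+*} ⊆ R_Θ(θ) ⊆ X^{Q_+*}; that is, every element of X^{Z_+*} is the common ratio of some geometric sequence in Θ containing θ, and every common ratio of a geometric sequence in Θ containing θ lies in X^{Q_+*}. -/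
/-- Every element of `ZProd X` has an exponent representation. -/
lemma zprod_rep {X : Finset ℝ} {p : ℝ} (hp : p ∈ ZProd X) :
    ∃ m : ℝ → ℕ, p = ∏ a ∈ X, a ^ m a := by
  rcases hp with h1 | ⟨m, _, hm⟩
  · exact ⟨fun _ => 0, by simp [Set.mem_singleton_iff.mp h1]⟩
  · exact ⟨m, hm⟩

/-- Any product of elements of `X` with natural exponents lies in `ZProd X`. -/
lemma mem_zprod (X : Finset ℝ) (m : ℝ → ℕ) : (∏ a ∈ X, a ^ m a) ∈ ZProd X := by
  by_cases h : ∃ a ∈ X, m a ≠ 0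
  · exact Or.inr ⟨m, h, rfl⟩
  · push_neg at h
    left
    exact Finset.prod_eq_one fun a ha => by rw [h a ha, pow_zero]

lemma zprod_pos {X : Finset ℝ} (hX : ∀ x ∈ X, x ∈ Set.Ioo (0:ℝ) 1) {p : ℝ}
    (hp : p ∈ ZProd X) : 0 < p := by
  obtain ⟨m, rfl⟩ := zprod_rep hp
  exact Finset.prod_pos fun a ha => pow_pos (hX a ha).1 _

lemma zprodstar_lt_one {X : Finset ℝ} (hX : ∀ x ∈ X, x ∈ Set.Ioo (0:ℝ) 1) {r : ℝ}
    (hr : r ∈ ZProdStar X) : r < 1 := by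
  obtain ⟨m, ⟨a0, ha0, hma0⟩, rfl⟩ := hr
  rw [← Finset.mul_prod_erase X (fun a => a ^ m a) ha0]
  have h1 : a0 ^ m a0 < 1 := pow_lt_one₀ (hX a0 ha0).1.le (hX a0 ha0).2 hma0
  have h2 : (∏ a ∈ X.erase a0, a ^ m a) ≤ 1 :=
    Finset.prod_le_one (fun a ha => (pow_pos (hX a (Finset.mem_of_mem_erase ha)).1 _).le)
      (fun a ha => pow_le_one₀ (hX a (Finset.mem_of_mem_erase ha)).1.le
        (hX a (Finset.mem_of_mem_erase ha)).2.le)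
  calc a0 ^ m a0 * ∏ a ∈ X.erase a0, a ^ m a ≤ a0 ^ m a0 * 1 := by
        exact mul_le_mul_of_nonneg_left h2 (pow_pos (hX a0 ha0).1 _).le
    _ = a0 ^ m a0 := mul_one _
    _ < 1 := h1

theorem stmt1 (X Λ : Finset ℝ) (hX : ∀ x ∈ X, x ∈ Set.Ioo (0:ℝ) 1)
    (hΛ : ∀ l ∈ Λ, (0:ℝ) < l)
    (Θ : Set ℝ) (hΘ : Θ = Set.image2 (· * ·) (↑Λ : Set ℝ) (ZProd X)) :
    ∀ θ ∈ Θ, ZProdStar X ⊆ RSet Θ θ ∧ RSet Θ θ ⊆ QProdStar X := by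
  subst hΘ
  intro θ hθ
  rw [Set.mem_image2] at hθ
  obtain ⟨l0, hl0, p0, hp0, hθeq⟩ := hθ
  obtain ⟨m0, hm0⟩ := zprod_rep hp0
  constructor
  · -- ZProdStar X ⊆ RSet Θ θ
    intro r hrmem
    have hrlt : r < 1 := zprodstar_lt_one hX hrmem
    obtain ⟨mr, -, hr⟩ := hrmem
    have hrpos : 0 < r := by
      rw [hr]; exact Finset.prod_pos fun a ha => pow_pos (hX a ha).1 _
    refine ⟨hrpos, hrlt, θ, Set.mem_image2.mpr ⟨l0, hl0, p0, hp0, hθeq⟩,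
      ⟨0, by simp⟩, fun k => ?_⟩
    rw [Set.mem_image2]
    refine ⟨l0, hl0, p0 * r ^ k, ?_, by rw [← hθeq]; ring⟩
    have hkey : p0 * r ^ k = ∏ a ∈ X, a ^ (m0 a + mr a * k) := by
      rw [hm0, hr, ← Finset.prod_pow, ← Finset.prod_mul_distrib]
      exact Finset.prod_congr rfl fun a _ => by rw [pow_add, pow_mul]
    rw [hkey]
    exact mem_zprod X _
  · -- RSet Θ θ ⊆ QProdStar X
    rintro r ⟨hr0, hr1, θ', hθ', ⟨k0, hk0⟩, hall⟩
    have hθ'pos : 0 < θ' := by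
      rw [Set.mem_image2] at hθ'
      obtain ⟨l, hl, p, hp, h⟩ := hθ'
      rw [← h]; exact mul_pos (hΛ l hl) (zprod_pos hX hp)
    simp only [Set.mem_image2] at hall
    choose lam hlam p hp heq using hall
    choose m hm using fun k => zprod_rep (hp k)
    -- infinite pigeonhole on Λ
    obtain ⟨y, hy⟩ := Finite.exists_infinite_fiber (fun k : ℕ => (⟨lam k, hlam k⟩ : {x // x ∈ Λ}))
    have hS : (setOf fun k : ℕ => (⟨lam k, hlam k⟩ : {x // x ∈ Λ}) = y).Infinite := by
      rw [← Set.infinite_coe_iff]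
      exact hy
    set P : ℕ → Prop := fun k => (⟨lam k, hlam k⟩ : {x // x ∈ Λ}) = y with hP
    have hmono := Nat.nth_strictMono hS
    have hmemS : ∀ n, P (Nat.nth P n) := fun n => Nat.nth_mem_of_infinite hS n
    -- Dickson's lemma
    have hpwo : (Set.univ : Set ({a // a ∈ X} → ℕ)).IsPWO :=
      Set.isPWO_of_wellQuasiOrderedLE Set.univ
    obtain ⟨n1, n2, hn12, hle⟩ :=
      hpwo.exists_lt (f := fun n => fun a : {a // a ∈ X} => m (Nat.nth P n) (a : ℝ)) (fun _ => Set.mem_univ _)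
    set k1 := Nat.nth P n1
    set k2 := Nat.nth P n2
    have hk12 : k1 < k2 := hmono hn12
    have hlameq : lam k1 = lam k2 := by
      have h1 := hmemS n1
      have h2 := hmemS n2
      rw [hP] at h1 h2
      have := h1.trans h2.symm
      exact congrArg Subtype.val this
    have hmle : ∀ a ∈ X, m k1 a ≤ m k2 a := fun a ha => hle ⟨a, ha⟩
    set d := k2 - k1 with hd
    have hdpos : 0 < d := Nat.sub_pos_of_lt hk12
    have hlpos : 0 < lam k1 := hΛ _ (hlam k1)
    -- key identity
    have hkey : r ^ d = ∏ a ∈ X, a ^ (m k2 a - m k1 a) := by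
      have e1 : lam k1 * p k1 = θ' * r ^ k1 := heq k1
      have e2 : lam k1 * p k2 = θ' * r ^ k2 := by rw [hlameq]; exact heq k2
      have hrk : θ' * r ^ k2 = (θ' * r ^ k1) * r ^ d := by
        rw [mul_assoc, ← pow_add]
        congr 2
        omega
      have e3 : p k2 = p k1 * r ^ d := by
        have h := e2.trans hrk
        rw [← e1, mul_assoc] at h
        exact mul_left_cancel₀ hlpos.ne' h
      have hsplit : (∏ a ∈ X, a ^ m k2 a) =
          (∏ a ∈ X, a ^ m k1 a) * ∏ a ∈ X, a ^ (m k2 a - m k1 a) := by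
        rw [← Finset.prod_mul_distrib]
        exact Finset.prod_congr rfl fun a ha => by
          rw [← pow_add]
          congr 1
          have := hmle a ha
          omega
      have := e3
      rw [hm k1, hm k2, hsplit] at this
      have hppos : (0:ℝ) < ∏ a ∈ X, a ^ m k1 a :=
        Finset.prod_pos fun a ha => pow_pos (hX a ha).1 _
      exact (mul_left_cancel₀ (ne_of_gt hppos) this).symm
    -- build rational exponents
    refine ⟨fun x => ((m k2 x - m k1 x : ℕ) : ℚ) / d, fun a _ => by positivity, ?_, ?_⟩
    · by_contra hcon
      push_neg at hcon
      have hall0 : ∀ a ∈ X, m k2 a - m k1 a = 0 := by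
        intro a ha
        have := hcon a ha
        field_simp at this
        exact_mod_cast this
      have : r ^ d = 1 := by
        rw [hkey]
        exact Finset.prod_eq_one fun a ha => by rw [hall0 a ha, pow_zero]
      have : r ^ d < 1 := pow_lt_one₀ hr0.le hr1 hdpos.ne'
      linarith
    · have hdR : ((d : ℝ)) ≠ 0 := Nat.cast_ne_zero.mpr hdpos.ne'
      have step1 : r = (r ^ d) ^ ((d : ℝ)⁻¹) :=
        (Real.pow_rpow_inv_natCast hr0.le hdpos.ne').symm
      rw [step1, hkey,
        ← Real.finset_prod_rpow X _ (fun a ha => (pow_pos (hX a ha).1 _).le) _]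
      refine Finset.prod_congr rfl fun a ha => ?_
      have ha0 : (0:ℝ) ≤ a := (hX a ha).1.le
      rw [← Real.rpow_natCast a (m k2 a - m k1 a), ← Real.rpow_mul ha0]
      congr 1
      push_cast
      ring
end

section
/- Let X ⊂ (0,1) and Λ, Γ ⊂ (0,∞) be finite sets with Γ nonempty having a positive minimum δ, and suppose Λ X^{Z_+} ⊆ (0, δ). Let Θ = Γ ∪ Λ X^{Z_+}. Then for every θ ∈ Θ with θ < min Γ, one has X ⊆ X^{Z_+*} ⊆ R_Θ(θ) ⊆ X^{Q_+*}. -/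
lemma zprod_iff {X : Finset ℝ} {y : ℝ} :
    y ∈ ZProd X ↔ ∃ m : ℝ → ℕ, y = ∏ a ∈ X, a ^ m a := by
  constructor
  · rintro (h | ⟨m, _, rfl⟩)
    · refine ⟨fun _ => 0, ?_⟩
      simp only [Set.mem_singleton_iff] at h
      simp [h]
    · exact ⟨m, rfl⟩
  · rintro ⟨m, rfl⟩
    by_cases h : ∃ a ∈ X, m a ≠ 0
    · exact Or.inr ⟨m, h, rfl⟩
    · push_neg at h
      left
      have : ∀ a ∈ X, a ^ m a = 1 := fun a ha => by rw [h a ha, pow_zero]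
      simp [Finset.prod_congr rfl this]

lemma zprodstar_pos {X : Finset ℝ} (hX : ∀ x ∈ X, x ∈ Set.Ioo (0:ℝ) 1) {y : ℝ}
    (hy : y ∈ ZProdStar X) : 0 < y ∧ y < 1 := by
  obtain ⟨m, ⟨a0, ha0, hm0⟩, rfl⟩ := hy
  constructor
  · exact Finset.prod_pos fun a ha => pow_pos (hX a ha).1 _
  · rw [← Finset.prod_erase_mul _ _ ha0]
    have h1 : ∏ a ∈ X.erase a0, a ^ m a ≤ 1 :=
      Finset.prod_le_one (fun a ha => pow_nonneg (hX a (Finset.mem_of_mem_erase ha)).1.le _)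
        (fun a ha => pow_le_one₀ (hX a (Finset.mem_of_mem_erase ha)).1.le
          (hX a (Finset.mem_of_mem_erase ha)).2.le)
    have h2 : a0 ^ m a0 < 1 := pow_lt_one₀ (hX a0 ha0).1.le (hX a0 ha0).2 hm0
    calc (∏ a ∈ X.erase a0, a ^ m a) * a0 ^ m a0 ≤ 1 * a0 ^ m a0 := by
          apply mul_le_mul_of_nonneg_right h1 (pow_nonneg (hX a0 ha0).1.le _)
      _ < 1 := by rwa [one_mul]

lemma zprod_mul {X : Finset ℝ} {y z : ℝ} (hy : y ∈ ZProd X) (hz : z ∈ ZProd X) :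
    y * z ∈ ZProd X := by
  rw [zprod_iff] at *
  obtain ⟨m, rfl⟩ := hy; obtain ⟨m', rfl⟩ := hz
  refine ⟨m + m', ?_⟩
  rw [← Finset.prod_mul_distrib]
  exact Finset.prod_congr rfl fun a _ => by rw [Pi.add_apply, pow_add]

lemma zprod_pow {X : Finset ℝ} {y : ℝ} (hy : y ∈ ZProd X) (k : ℕ) : y ^ k ∈ ZProd X := by
  induction k with
  | zero => exact Or.inl (by simp)
  | succ n ih => rw [pow_succ]; exact zprod_mul ih hy

theorem stmt6 (X Λ Γ : Finset ℝ) (hX : ∀ x ∈ X, x ∈ Set.Ioo (0:ℝ) 1)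
    (hΛ : ∀ l ∈ Λ, (0:ℝ) < l) (hΓpos : ∀ g ∈ Γ, (0:ℝ) < g)
    (hΓne : Γ.Nonempty)
    (hsmall : Set.image2 (· * ·) (↑Λ : Set ℝ) (ZProd X) ⊆ Set.Ioo 0 (Γ.min' hΓne))
    (Θ : Set ℝ) (hΘ : Θ = (↑Γ : Set ℝ) ∪ Set.image2 (· * ·) (↑Λ : Set ℝ) (ZProd X)) :
    ∀ θ ∈ Θ, θ < Γ.min' hΓne →
      (↑X : Set ℝ) ⊆ ZProdStar X ∧ ZProdStar X ⊆ RSet Θ θ ∧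
        RSet Θ θ ⊆ QProdStar X := by
  intro θ hθ hθlt
  set δ := Γ.min' hΓne with hδ
  -- θ is in the Λ-part
  have hθΛ : θ ∈ Set.image2 (· * ·) (↑Λ : Set ℝ) (ZProd X) := by
    rw [hΘ] at hθ
    rcases hθ with h | h
    · exact absurd hθlt (not_lt.2 (Γ.min'_le _ h))
    · exact h
  have hΘsmall : ∀ t ∈ Θ, t < δ → t ∈ Set.image2 (· * ·) (↑Λ : Set ℝ) (ZProd X) := by
    intro t ht htlt
    rw [hΘ] at ht
    rcases ht with h | h
    · exact absurd htlt (not_lt.2 (Γ.min'_le _ h))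
    · exact h
  have hΘpos : ∀ t ∈ Θ, (0:ℝ) < t := by
    intro t ht
    rw [hΘ] at ht
    rcases ht with h | h
    · exact hΓpos t h
    · exact (hsmall h).1
  refine ⟨?_, ?_, ?_⟩
  · -- X ⊆ ZProdStar X
    intro x hx
    refine ⟨fun a => if a = x then 1 else 0, ⟨x, hx, by simp⟩, ?_⟩
    rw [Finset.prod_eq_single x (fun b _ hb => by simp [hb]) (fun h => absurd hx h)]
    simp
  · -- ZProdStar X ⊆ RSet Θ θ
    intro r hr
    obtain ⟨hr0, hr1⟩ := zprodstar_pos hX hr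
    refine ⟨hr0, hr1, θ, hθ, ⟨0, by simp⟩, ?_⟩
    intro k
    obtain ⟨l, hl, x, hx, rfl⟩ := hθΛ
    rw [hΘ]
    right
    rw [mul_assoc]
    exact Set.mem_image2_of_mem hl (zprod_mul hx (zprod_pow (Or.inr hr) k))
  · -- RSet Θ θ ⊆ QProdStar X
    intro r hr
    obtain ⟨hr0, hr1, θ', hθ'Θ, ⟨k0, hk0⟩, hall⟩ := hr
    have hθ'pos : 0 < θ' := hΘpos θ' hθ'Θ
    have hδpos : 0 < δ := hΓpos _ (Γ.min'_mem hΓne)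
    -- eventually below δ
    have htend : Filter.Tendsto (fun k : ℕ => θ' * r ^ k) Filter.atTop (nhds 0) := by
      have := tendsto_pow_atTop_nhds_zero_of_lt_one hr0.le hr1
      simpa using this.const_mul θ'
    obtain ⟨K, hK⟩ := Filter.eventually_atTop.1 (htend.eventually_lt_const hδpos)
    -- choose representations
    have hrep : ∀ k : ℕ, ∃ l, l ∈ Λ ∧ ∃ m : ℝ → ℕ,
        θ' * r ^ (K + k) = l * ∏ a ∈ X, a ^ m a := by
      intro k
      obtain ⟨l, hl, x, hx, hEq⟩ := hΘsmall _ (hall (K + k)) (hK (K + k) (Nat.le_add_right _ _))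
      obtain ⟨m, rfl⟩ := zprod_iff.1 hx
      exact ⟨l, hl, m, hEq.symm⟩
    choose L hL M hM using hrep
    -- pigeonhole on Λ
    classical
    obtain ⟨l0, hfib⟩ := Finite.exists_infinite_fiber (fun k => (⟨L k, hL k⟩ : {x // x ∈ Λ}))
    set S : Set ℕ := (fun k => (⟨L k, hL k⟩ : {x // x ∈ Λ})) ⁻¹' {l0} with hS
    have : Infinite S := hfib
    let e := Nat.orderEmbeddingOfSet S
    have heS : ∀ n, e n ∈ S := fun n => by
      have : e n ∈ Set.range e := Set.mem_range_self n
      rwa [Nat.orderEmbeddingOfSet_range] at this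
    -- Dickson's lemma
    have hpwo : (Set.univ : Set ({x // x ∈ X} → ℕ)).IsPWO :=
      Set.isPWO_of_wellQuasiOrderedLE Set.univ
    obtain ⟨i, j, hij, hle⟩ := hpwo (fun n => ⟨fun x : {x // x ∈ X} => M (e n) x, Set.mem_univ _⟩)
    replace hle : (fun x : {x // x ∈ X} => M (e i) x) ≤ (fun x : {x // x ∈ X} => M (e j) x) := hle
    have heij : e i < e j := e.strictMono hij
    have hLeq : L (e i) = L (e j) := by
      have h1 := heS i; have h2 := heS j
      simp only [hS, Set.mem_preimage, Set.mem_singleton_iff] at h1 h2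
      have := h1.trans h2.symm
      exact congrArg Subtype.val this
    set n : ℕ := e j - e i with hn
    have hnpos : 0 < n := Nat.sub_pos_of_lt heij
    set d : ℝ → ℕ := fun x => M (e j) x - M (e i) x with hd
    have hmle : ∀ x ∈ X, M (e i) x ≤ M (e j) x := fun x hx => hle ⟨x, hx⟩
    have hl0pos : 0 < L (e i) := hΛ _ (hL (e i))
    -- key identity : ∏ x^{d x} = r^n
    have hprodsplit : (∏ a ∈ X, a ^ M (e j) a) = (∏ a ∈ X, a ^ M (e i) a) * ∏ a ∈ X, a ^ d a := by
      rw [← Finset.prod_mul_distrib]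
      refine Finset.prod_congr rfl fun a ha => ?_
      rw [← pow_add, Nat.add_sub_cancel' (hmle a ha)]
    have hPpos : 0 < ∏ a ∈ X, a ^ M (e i) a :=
      Finset.prod_pos fun a ha => pow_pos (hX a ha).1 _
    have hkey : (∏ a ∈ X, a ^ d a) = r ^ n := by
      have h1 : θ' * r ^ (K + e j) = θ' * r ^ (K + e i) * r ^ n := by
        rw [mul_assoc, ← pow_add]
        congr 1
        rw [add_assoc, Nat.add_sub_cancel' heij.le]
      rw [hM (e j), hM (e i), hLeq, hprodsplit, mul_assoc] at h1
      have h2 := mul_left_cancel₀ (ne_of_gt (hΛ _ (hL (e j)))) h1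
      exact mul_left_cancel₀ (ne_of_gt hPpos) h2
    -- build rational exponents
    refine ⟨fun x => (d x : ℚ) / (n : ℚ), fun a _ => by positivity, ?_, ?_⟩
    · by_contra h
      push_neg at h
      have hd0 : ∀ a ∈ X, d a = 0 := by
        intro a ha
        have := h a ha
        have hn0 : (n : ℚ) ≠ 0 := Nat.cast_ne_zero.2 hnpos.ne'
        field_simp at this
        exact_mod_cast this
      have : (∏ a ∈ X, a ^ d a) = 1 := by
        refine Finset.prod_eq_one fun a ha => by rw [hd0 a ha, pow_zero]
      rw [hkey] at this
      have : r ^ n < 1 := pow_lt_one₀ hr0.le hr1 hnpos.ne'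
      linarith
    · -- r = ∏ a ^ (d a / n)
      have hn0 : (n : ℝ) ≠ 0 := Nat.cast_ne_zero.2 hnpos.ne'
      have : (∏ a ∈ X, a ^ (((d a : ℚ) / (n:ℚ) : ℚ) : ℝ)) =
          (∏ a ∈ X, (a:ℝ) ^ (d a : ℕ)) ^ ((n:ℝ)⁻¹) := by
        rw [← Real.finset_prod_rpow _ _ (fun a ha => pow_nonneg (hX a ha).1.le _)]
        refine Finset.prod_congr rfl fun a ha => ?_
        rw [← Real.rpow_natCast a (d a), ← Real.rpow_mul (hX a ha).1.le]
        push_cast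
        rw [div_eq_mul_inv]
      rw [this, hkey, ← Real.rpow_natCast r n, ← Real.rpow_mul hr0.le,
        mul_inv_cancel₀ hn0, Real.rpow_one]
end

section
/- Let A ⊂ (0,1) be a finite set and suppose r ∈ (0,1) satisfies: there exist λ > 0 and elements y_0, y_1, y_2, ... ∈ A^{Z_+} with λ y_k = θ' r^k for all k ∈ ℕ (for some θ' > 0). Then r ∈ A^{Q_+*}. -/
theorem stmt19 (A : Finset ℝ) (hA : ∀ a ∈ A, a ∈ Set.Ioo (0:ℝ) 1)
    (r : ℝ) (hr : r ∈ Set.Ioo (0:ℝ) 1) (lam θ' : ℝ) (hlam : 0 < lam)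
    (hθ' : 0 < θ') (y : ℕ → ℝ) (hy : ∀ k, y k ∈ ZProd A)
    (heq : ∀ k : ℕ, lam * y k = θ' * r ^ k) : r ∈ QProdStar A := by
  obtain ⟨hr0, hr1⟩ := hr
  -- choose exponent vectors
  have hm : ∀ k : ℕ, ∃ m : ℝ → ℕ, y k = ∏ a ∈ A, a ^ m a := by
    intro k
    rcases hy k with h1 | ⟨m, _, hm⟩
    · exact ⟨fun _ => 0, by simp [Set.mem_singleton_iff.mp h1]⟩
    · exact ⟨m, hm⟩
  choose m hmy using hm
  -- Dickson's lemma on the restrictions to A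
  have hpwo : (Set.univ : Set ({a // a ∈ A} → ℕ)).IsPWO :=
    Set.isPWO_of_wellQuasiOrderedLE _
  obtain ⟨k, l, hkl, hle⟩ := hpwo.exists_lt (f := fun k (a : A) => m k (a : ℝ)) (fun _ => Set.mem_univ _)
  -- y l = y k * r ^ (l - k)
  have hylk : y l = y k * r ^ (l - k) := by
    have h2 := heq (k + (l - k))
    rw [pow_add, ← mul_assoc, ← heq k, mul_assoc] at h2
    have h3 := mul_left_cancel₀ hlam.ne' h2
    rwa [show k + (l - k) = l by omega] at h3
  -- key product identity
  have hprod : r ^ (l - k) = ∏ a ∈ A, a ^ (m l a - m k a) := by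
    have hyk : (0:ℝ) < y k := by
      have := heq k
      nlinarith [pow_pos hr0 k]
    have hsplit : (∏ a ∈ A, a ^ m l a) = (∏ a ∈ A, a ^ m k a) * ∏ a ∈ A, a ^ (m l a - m k a) := by
      rw [← Finset.prod_mul_distrib]
      refine Finset.prod_congr rfl fun a ha => ?_
      rw [← pow_add]
      congr 1
      have := hle ⟨a, ha⟩
      simp only at this
      omega
    have h3 : y l = y k * ∏ a ∈ A, a ^ (m l a - m k a) := by
      rw [hmy l, hmy k] at *
      rw [hsplit]
    rw [hylk] at h3
    exact mul_left_cancel₀ (ne_of_gt hyk) h3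
  set d := l - k with hd
  have hdpos : 0 < d := by omega
  -- the rational exponents
  refine ⟨fun a => (m l a - m k a : ℕ) / (d : ℚ), fun a _ => by positivity, ?_, ?_⟩
  · -- not all zero
    by_contra h
    push_neg at h
    have : ∀ a ∈ A, m l a - m k a = 0 := by
      intro a ha
      have := h a ha
      field_simp at this
      exact_mod_cast this
    have h1 : r ^ d = 1 := by
      rw [hprod]
      exact Finset.prod_congr rfl (fun a ha => by rw [this a ha, pow_zero]) |>.trans
        Finset.prod_const_one
    have : r ^ d < 1 := pow_lt_one₀ hr0.le hr1 (by omega)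
    linarith
  · -- r = ∏ a ^ (q a)
    have hA0 : ∀ a ∈ A, (0:ℝ) ≤ a := fun a ha => (hA a ha).1.le
    have key : r = (∏ a ∈ A, (a:ℝ) ^ ((m l a - m k a : ℕ) : ℝ)) ^ ((d:ℝ)⁻¹) := by
      have h1 : (∏ a ∈ A, (a:ℝ) ^ ((m l a - m k a : ℕ) : ℝ)) = r ^ (d:ℝ) := by
        rw [Real.rpow_natCast, hprod]
        exact Finset.prod_congr rfl fun a ha => Real.rpow_natCast a _
      rw [h1, ← Real.rpow_mul hr0.le,
        mul_inv_cancel₀ (by exact_mod_cast hdpos.ne' : (d:ℝ) ≠ 0), Real.rpow_one]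
    rw [key, ← Real.finset_prod_rpow A _ (fun a ha => Real.rpow_nonneg (hA0 a ha) _) _]
    refine Finset.prod_congr rfl fun a ha => ?_
    rw [← Real.rpow_mul (hA0 a ha)]
    congr 1
    push_cast
    ring
end
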